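/- For every real number c > 0, the series ∑_{n=1}^∞ n!/((c)ₙ·n²) converges and equals ∑_{k=0}^∞ 1/(c+k)², the value of the trigamma function ψ⁽¹⁾(c). In particular, for an integer m ≥ 1, ∑_{n=1}^∞ n!/((m/2)ₙ·n²) = ψ⁽¹⁾(m/2). -/

import Mathlib

open Filter Topology

/-- Pochhammer symbol `(a)ₙ = ∏_{i=1}^n (a+i-1)`. -/
noncomputable def poch (a : ℝ) (n : ℕ) : ℝ := ∏ i ∈ Finset.range n, (a + i)

lemma poch_pos {a : ℝ} (ha : 0 < a) (n : ℕ) : 0 < poch a n := by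
  apply Finset.prod_pos; intro i _; positivity

lemma poch_succ (a : ℝ) (n : ℕ) : poch a (n + 1) = poch a n * (a + n) :=
  Finset.prod_range_succ _ _

lemma poch_succ' (a : ℝ) (n : ℕ) : poch a (n + 1) = a * poch (a + 1) n := by
  rw [poch, Finset.prod_range_succ']
  rw [mul_comm]
  congr 1
  · push_cast; simp [poch]
  · apply Finset.prod_congr rfl; intro i _; push_cast; ring

lemma lemA {e : ℝ} (he : 1 < e) :
    HasSum (fun m : ℕ => (m.factorial : ℝ) / poch e (m + 1)) (1 / (e - 1)) := by
  have he0 : 0 < e := lt_trans one_pos he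
  have he1 : e - 1 ≠ 0 := sub_ne_zero.mpr (ne_of_gt he)
  set g : ℕ → ℝ := fun m => (m.factorial : ℝ) / ((e - 1) * poch e m) with hg
  have hterm : ∀ m : ℕ, (m.factorial : ℝ) / poch e (m + 1) = g m - g (m + 1) := by
    intro m
    have hp := (poch_pos he0 m).ne'
    have hem : e + (m : ℝ) ≠ 0 := by positivity
    simp only [hg, poch_succ, Nat.factorial_succ]
    push_cast
    field_simp
    ring
  have hnonneg : ∀ m : ℕ, 0 ≤ (m.factorial : ℝ) / poch e (m + 1) := fun m =>
    div_nonneg (Nat.cast_nonneg _) (poch_pos he0 _).le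
  rw [hasSum_iff_tendsto_nat_of_nonneg hnonneg]
  have hps : ∀ M, ∑ m ∈ Finset.range M, (m.factorial : ℝ) / poch e (m + 1) = g 0 - g M := by
    intro M
    rw [Finset.sum_congr rfl fun m _ => hterm m]
    exact Finset.sum_range_sub' g M
  have hg0 : g 0 = 1 / (e - 1) := by simp [hg, poch]
  have hlim : Tendsto g atTop (𝓝 0) := by
    have key : ∀ᶠ M : ℕ in atTop,
        1 / (e - 1) * ((e + M) * (M : ℝ) ^ (-e)) * Real.GammaSeq e M = g M := by
      filter_upwards [eventually_ge_atTop 1] with M hM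
      have hM0 : (0 : ℝ) < M := by exact_mod_cast hM
      have hgs : Real.GammaSeq e M = (M : ℝ) ^ e * M.factorial / poch e (M + 1) := rfl
      have hp := (poch_pos he0 M).ne'
      have hrp : ((M : ℝ) ^ e) ≠ 0 := (Real.rpow_pos_of_pos hM0 e).ne'
      have hem : e + (M : ℝ) ≠ 0 := by positivity
      simp only [hg, hgs, poch_succ, Real.rpow_neg hM0.le]
      field_simp
    have t1 : Tendsto (fun M : ℕ => (e + M) * (M : ℝ) ^ (-e)) atTop (𝓝 0) := by
      have ha : Tendsto (fun M : ℕ => ((M : ℝ)) ^ (-(e - 1))) atTop (𝓝 0) :=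
        (tendsto_rpow_neg_atTop (by linarith)).comp tendsto_natCast_atTop_atTop
      have hb : Tendsto (fun M : ℕ => ((M : ℝ)) ^ (-e)) atTop (𝓝 0) :=
        (tendsto_rpow_neg_atTop he0).comp tendsto_natCast_atTop_atTop
      have hsum : Tendsto (fun M : ℕ => ((M : ℝ)) ^ (-(e - 1)) + e * ((M : ℝ)) ^ (-e))
          atTop (𝓝 0) := by
        have := ha.add (hb.const_mul e)
        simpa using this
      apply Tendsto.congr' _ hsum
      filter_upwards [eventually_ge_atTop 1] with M hM
      have hM0 : (0 : ℝ) < M := by exact_mod_cast hM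
      have : ((M : ℝ)) ^ (-(e - 1)) = (M : ℝ) * ((M : ℝ)) ^ (-e) := by
        rw [show -(e - 1) = 1 + -e by ring, Real.rpow_add hM0, Real.rpow_one]
      rw [this]; ring
    have := (t1.const_mul (1 / (e - 1))).mul (Real.GammaSeq_tendsto_Gamma e)
    simp only [mul_zero, zero_mul] at this
    exact Tendsto.congr' key (by simpa using this)
  have h : Tendsto (fun M : ℕ => g 0 - g M) atTop (𝓝 (g 0 - 0)) :=
    (tendsto_const_nhds (x := g 0)).sub hlim
  rw [sub_zero] at h
  rw [← hg0]
  exact Tendsto.congr (fun M => (hps M).symm) h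

lemma lemB {d : ℝ} (hd : 0 < d) (j : ℕ) :
    HasSum (fun k : ℕ => 1 / poch (d + k) (j + 2))
      (1 / (((j : ℝ) + 1) * poch d (j + 1))) := by
  have hdk : ∀ k : ℕ, (0 : ℝ) < d + k := fun k => by positivity
  set g : ℕ → ℝ := fun k => 1 / (((j : ℝ) + 1) * poch (d + k) (j + 1)) with hg
  have hQ : ∀ k : ℕ, poch (d + (k + 1 : ℕ)) (j + 1) = poch (d + k + 1) (j + 1) := by
    intro k; congr 1; push_cast; ring
  have hterm : ∀ k : ℕ, 1 / poch (d + k) (j + 2) = g k - g (k + 1) := by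
    intro k
    have h1 : poch (d + k) (j + 2) = poch (d + k) (j + 1) * (d + k + (j + 1)) := by
      have := poch_succ (d + k) (j + 1); push_cast at this ⊢; linarith
    have h2 : poch (d + k) (j + 2) = (d + k) * poch (d + k + 1) (j + 1) := by
      have := poch_succ' (d + k) (j + 1)
      rw [show d + (k : ℝ) + 1 = d + k + 1 by ring] at this
      exact this
    have hrel : poch (d + k) (j + 1) * (d + k + (j + 1))
        = (d + k) * poch (d + k + 1) (j + 1) := by rw [← h1, ← h2]
    have hP := (poch_pos (hdk k) (j + 1)).ne'
    have hQpos : (0 : ℝ) < poch (d + k + 1) (j + 1) := poch_pos (by positivity) (j + 1)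
    have hj1 : ((j : ℝ) + 1) ≠ 0 := by positivity
    have hdk' : d + (k : ℝ) ≠ 0 := (hdk k).ne'
    have hA : ((j : ℝ) + 1) * poch (d + k) (j + 1) ≠ 0 :=
      (mul_pos (by positivity) (poch_pos (hdk k) _)).ne'
    have hB : ((j : ℝ) + 1) * poch (d + k + 1) (j + 1) ≠ 0 :=
      (mul_pos (by positivity) hQpos).ne'
    have hC : (d + (k : ℝ)) * poch (d + k + 1) (j + 1) ≠ 0 :=
      (mul_pos (hdk k) hQpos).ne'
    simp only [hg, hQ, h2]
    rw [div_sub_div _ _ hA hB, div_eq_div_iff hC (mul_ne_zero hA hB)]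
    linear_combination (((j : ℝ) + 1) * poch (d + k + 1) (j + 1)) * hrel
  have hnonneg : ∀ k : ℕ, 0 ≤ 1 / poch (d + k) (j + 2) := fun k =>
    (one_div_pos.mpr (poch_pos (hdk k) _)).le
  rw [hasSum_iff_tendsto_nat_of_nonneg hnonneg]
  have hps : ∀ K, ∑ k ∈ Finset.range K, 1 / poch (d + k) (j + 2) = g 0 - g K := by
    intro K
    rw [Finset.sum_congr rfl fun k _ => hterm k]
    exact Finset.sum_range_sub' g K
  have hg0 : g 0 = 1 / (((j : ℝ) + 1) * poch d (j + 1)) := by simp [hg]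
  have hlim : Tendsto g atTop (𝓝 0) := by
    apply squeeze_zero' (g := fun k : ℕ => 1 / (k : ℝ))
    · exact Eventually.of_forall fun k =>
        (one_div_pos.mpr (mul_pos (by positivity) (poch_pos (hdk k) _))).le
    · filter_upwards [eventually_ge_atTop 1] with k hk
      have hk0 : (0 : ℝ) < k := by exact_mod_cast hk
      have hone : (1 : ℝ) ≤ poch (d + k + 1) j := by
        rw [poch]
        calc (1:ℝ) = ∏ _i ∈ Finset.range j, (1:ℝ) := by simp
          _ ≤ ∏ i ∈ Finset.range j, (d + k + 1 + i) := by
              apply Finset.prod_le_prod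
              · intros; norm_num
              · intro i _
                have : (0:ℝ) ≤ (i:ℝ) := Nat.cast_nonneg i
                nlinarith [hdk k]
      have hpoch : (k : ℝ) ≤ poch (d + k) (j + 1) := by
        rw [poch_succ']
        nlinarith [hdk k]
      apply one_div_le_one_div_of_le hk0
      nlinarith [poch_pos (hdk k) (j + 1)]
    · exact tendsto_one_div_atTop_nhds_zero_nat
  have h : Tendsto (fun K : ℕ => g 0 - g K) atTop (𝓝 (g 0 - 0)) :=
    (tendsto_const_nhds (x := g 0)).sub hlim
  rw [sub_zero] at h
  rw [← hg0]
  exact Tendsto.congr (fun K => (hps K).symm) h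

lemma sum_inv_sq_summable {c : ℝ} (hc : 0 < c) :
    Summable fun k : ℕ => 1 / (c + (k : ℝ)) ^ 2 := by
  rw [← summable_nat_add_iff 1]
  have h0 : Summable fun k : ℕ => 1 / ((k : ℝ) + 1) ^ 2 := by
    have h1 : Summable (fun n : ℕ => 1 / (n : ℝ) ^ 2) :=
      Real.summable_one_div_nat_pow.mpr one_lt_two
    have h2 := (summable_nat_add_iff 1).mpr h1
    apply h2.congr
    intro k; push_cast; ring
  apply Summable.of_nonneg_of_le _ _ h0
  · intro k; positivity
  · intro k
    have h3 : (0:ℝ) < ((k:ℝ) + 1) ^ 2 := by positivity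
    apply one_div_le_one_div_of_le h3
    have : ((k:ℝ) + 1) ≤ c + ((k:ℕ) + 1 : ℕ) := by push_cast; linarith
    nlinarith [(Nat.cast_nonneg k : (0:ℝ) ≤ (k:ℝ))]

set_option maxHeartbeats 2000000 in
lemma main_lemma {c : ℝ} (hc : 0 < c) :
    HasSum (fun n : ℕ => ((n + 1).factorial : ℝ) / (poch c (n + 1) * ((n : ℝ) + 1) ^ 2))
      (∑' k : ℕ, 1 / (c + (k : ℝ)) ^ 2) := by
  have hck : ∀ k : ℕ, (0 : ℝ) < c + k := fun k => by positivity
  set f : ℕ × ℕ → ℝ := fun p => (p.2.factorial : ℝ) / poch (c + p.1) (p.2 + 2) with hf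
  have hcol : ∀ k : ℕ, HasSum (fun n => f (k, n)) (1 / (c + (k : ℝ)) ^ 2) := by
    intro k
    have hA := lemA (e := c + k + 1) (by linarith [hck k])
    rw [show c + (k : ℝ) + 1 - 1 = c + k by ring] at hA
    have h2 := hA.div_const (c + k)
    have heq : (fun n : ℕ => (n.factorial : ℝ) / poch (c + (k:ℝ) + 1) (n + 1) / (c + (k:ℝ)))
        = fun n => f (k, n) := by
      funext n
      simp only [hf]
      rw [show poch (c + (k:ℝ)) (n + 2) = (c + (k:ℝ)) * poch (c + (k:ℝ) + 1) (n + 1) from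
        poch_succ' _ _, div_div, mul_comm]
    have hv : 1 / (c + (k : ℝ)) / (c + (k : ℝ)) = 1 / (c + (k : ℝ)) ^ 2 := by
      rw [div_div, ← sq]
    rw [heq, hv] at h2
    exact h2
  have hrow : ∀ n : ℕ, HasSum (fun k => f (k, n))
      ((n.factorial : ℝ) / (((n : ℝ) + 1) * poch c (n + 1))) := by
    intro n
    have hB := (lemB hc n).mul_left (n.factorial : ℝ)
    have heq : (fun k : ℕ => (n.factorial : ℝ) * (1 / poch (c + (k:ℝ)) (n + 2)))
        = fun k => f (k, n) := by
      funext k; simp only [hf]; rw [mul_one_div]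
    rw [heq, mul_one_div] at hB
    exact hB
  have hnn : 0 ≤ f := fun p => div_nonneg (Nat.cast_nonneg _) (poch_pos (hck p.1) _).le
  have hsummable : Summable f := by
    rw [summable_prod_of_nonneg hnn]
    refine ⟨fun k => (hcol k).summable, ?_⟩
    apply (sum_inv_sq_summable hc).congr
    intro k
    exact ((hcol k).tsum_eq).symm
  have hfS : HasSum f (∑' p, f p) := hsummable.hasSum
  have hk : HasSum (fun k : ℕ => 1 / (c + (k : ℝ)) ^ 2) (∑' p, f p) :=
    hfS.prod_fiberwise hcol
  have hSval : (∑' p, f p) = ∑' k : ℕ, 1 / (c + (k : ℝ)) ^ 2 := hk.tsum_eq.symm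
  have hswap : HasSum (fun p : ℕ × ℕ => f (p.2, p.1)) (∑' p, f p) :=
    ((Equiv.prodComm ℕ ℕ).hasSum_iff).mpr hfS
  have hn : HasSum (fun n : ℕ => (n.factorial : ℝ) / (((n : ℝ) + 1) * poch c (n + 1)))
      (∑' p, f p) := hswap.prod_fiberwise hrow
  rw [← hSval]
  have hfin : (fun n : ℕ => ((n + 1).factorial : ℝ) / (poch c (n + 1) * ((n : ℝ) + 1) ^ 2))
      = fun n : ℕ => (n.factorial : ℝ) / (((n : ℝ) + 1) * poch c (n + 1)) := by
    funext n
    have hp := (poch_pos hc (n + 1)).ne'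
    have hn1 : ((n : ℝ) + 1) ≠ 0 := by positivity
    rw [Nat.factorial_succ]
    push_cast
    field_simp
  rw [hfin]
  exact hn

/-- for every real `c > 0`, the series `∑_{n=1}^∞ n!/((c)ₙ·n²)` converges
and equals the trigamma value `ψ⁽¹⁾(c) = ∑_{k=0}^∞ 1/(c+k)²`; in particular, for an
integer `m ≥ 1`, `∑_{n=1}^∞ n!/((m/2)ₙ·n²) = ψ⁽¹⁾(m/2)`. -/
theorem stmt8 :
    (∀ c : ℝ, 0 < c →
      HasSum (fun n : ℕ => ((n + 1).factorial : ℝ) / (poch c (n + 1) * ((n : ℝ) + 1) ^ 2))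
        (∑' k : ℕ, 1 / (c + (k : ℝ)) ^ 2)) ∧
    (∀ m : ℕ, 1 ≤ m →
      HasSum (fun n : ℕ =>
          ((n + 1).factorial : ℝ) / (poch ((m : ℝ) / 2) (n + 1) * ((n : ℝ) + 1) ^ 2))
        (∑' k : ℕ, 1 / ((m : ℝ) / 2 + (k : ℝ)) ^ 2)) := by
  refine ⟨fun c hc => main_lemma hc, fun m hm => main_lemma ?_⟩
  have : (1 : ℝ) ≤ (m : ℝ) := by exact_mod_cast hm
  linarith
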